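/- Each of the four parallel double-SIC vectors s_i ⊗ s_i (i ∈ {1,2,3,4}) is orthogonal to the singlet Ψ⁻, the family {s_i ⊗ s_i : i ∈ {1,2,3,4}} is linearly dependent, and its span equals the 3-dimensional orthogonal complement of ℂ·Ψ⁻ in ℂ²⊗ℂ². (Hence, by Chefles' linear-independence criterion, the parallel double-SIC ensemble S^{↑↑} admits no conclusive global discrimination.) -/

import Mathlib

/-!
Statement 6: Each parallel double-SIC vector `s_i ⊗ s_i` is orthogonal to the singlet
`Ψ⁻`, the family `{s_i ⊗ s_i}` is linearly dependent, and its span equals the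
3-dimensional orthogonal complement of `ℂ·Ψ⁻` in `ℂ²⊗ℂ²`.
-/

noncomputable section
open scoped ComplexInnerProductSpace

/-- The qubit Hilbert space `ℂ²`. -/
abbrev Qubit : Type := EuclideanSpace ℂ (Fin 2)

/-- The (Kronecker) tensor product of two vectors, realized in `EuclideanSpace ℂ (ι × κ)`. -/
def tp {ι κ : Type} (x : EuclideanSpace ℂ ι) (y : EuclideanSpace ℂ κ) :
    EuclideanSpace ℂ (ι × κ) :=
  (WithLp.equiv 2 (ι × κ → ℂ)).symm (fun p => x p.1 * y p.2)

/-- A qubit vector from its two coordinates. -/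
def mk2 (a b : ℂ) : Qubit := (WithLp.equiv 2 (Fin 2 → ℂ)).symm ![a, b]

/-- The cube root of unity phases `ζ k = exp(2πik/3)`. -/
def ζ (k : ℤ) : ℂ := Complex.exp (2 * (Real.pi : ℂ) * Complex.I * (k : ℂ) / 3)

/-- `1/√3` in `ℂ`. -/
def r3 : ℂ := ((Real.sqrt 3 : ℂ))⁻¹

/-- `√2` in `ℂ`. -/
def r2 : ℂ := (Real.sqrt 2 : ℂ)

/-- The qubit SIC states: `s 0 = |0⟩` and
`s j = (1/√3)(|0⟩ + √2 e^{2πi(j-1)/3} |1⟩)` for `j = 1, 2, 3`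
(indexing the paper's `s_1, …, s_4` by `Fin 4`). -/
def s : Fin 4 → Qubit :=
  ![mk2 1 0,
    mk2 r3 (r3 * r2 * ζ 0),
    mk2 r3 (r3 * r2 * ζ 1),
    mk2 r3 (r3 * r2 * ζ 2)]

/-- The singlet state `Ψ⁻ = (|01⟩ - |10⟩)/√2`. -/
def psiMinus : EuclideanSpace ℂ (Fin 2 × Fin 2) :=
  ((Real.sqrt 2 : ℂ))⁻¹ • (tp (mk2 1 0) (mk2 0 1) - tp (mk2 0 1) (mk2 1 0))

lemma tp_apply {ι κ : Type} (x : EuclideanSpace ℂ ι) (y : EuclideanSpace ℂ κ) (p : ι × κ) :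
    tp x y p = x p.1 * y p.2 := rfl

lemma mk2_apply_zero (a b : ℂ) : mk2 a b 0 = a := rfl
lemma mk2_apply_one (a b : ℂ) : mk2 a b 1 = b := rfl

lemma zeta_add (j k : ℤ) : ζ (j + k) = ζ j * ζ k := by
  rw [ζ, ζ, ζ, ← Complex.exp_add]; congr 1; push_cast; ring

lemma zeta_zero : ζ 0 = 1 := by simp [ζ]

lemma zeta_three : ζ 3 = 1 := by
  have h : (2 * (Real.pi : ℂ) * Complex.I * ((3:ℤ) : ℂ) / 3) = 2 * Real.pi * Complex.I := by
    push_cast; ring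
  rw [ζ, h, Complex.exp_two_pi_mul_I]

lemma zeta_ne_one : ζ 1 ≠ 1 := by
  intro h
  rw [ζ, Complex.exp_eq_one_iff] at h
  obtain ⟨n, hn⟩ := h
  push_cast at hn
  have h2π : (2:ℂ) * Real.pi * Complex.I ≠ 0 := by
    simp [Real.pi_ne_zero, Complex.I_ne_zero, Complex.ofReal_ne_zero]
  have h2 : ((2:ℂ) * Real.pi * Complex.I) * (1 - 3 * n) = 0 := by linear_combination 3 * hn
  have h3 : (1:ℂ) - 3 * n = 0 := (mul_eq_zero.mp h2).resolve_left h2π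
  have h4 : (1:ℤ) - 3 * n = 0 := by exact_mod_cast h3
  omega

lemma z11 : ζ 1 * ζ 1 = ζ 2 := by rw [← zeta_add]; norm_num
lemma z12 : ζ 1 * ζ 2 = 1 := by rw [← zeta_add]; norm_num [zeta_three]
lemma z22 : ζ 2 * ζ 2 = ζ 1 := by
  rw [← zeta_add, show (2+2:ℤ) = 3 + 1 by norm_num, zeta_add, zeta_three, one_mul]

lemma zeta_sum : 1 + ζ 1 + ζ 2 = 0 := by
  have hc : ζ 1 ^ 3 = 1 := by
    have : ζ 1 ^ 3 = ζ 1 * ζ 1 * ζ 1 := by ring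
    rw [this, z11, ← zeta_add, show (2+1:ℤ) = 3 by norm_num]; exact zeta_three
  have hfac : (ζ 1 - 1) * (1 + ζ 1 + ζ 1 ^ 2) = 0 := by linear_combination hc
  have h := (mul_eq_zero.mp hfac).resolve_left (sub_ne_zero.mpr zeta_ne_one)
  rw [← z11] at *
  linear_combination h

lemma hr3 : r3 * r3 = (3:ℂ)⁻¹ := by
  rw [r3, ← mul_inv, ← Complex.ofReal_mul, Real.mul_self_sqrt (by norm_num)]
  norm_num

lemma hr2 : r2 * r2 = 2 := by
  rw [r2, ← Complex.ofReal_mul, Real.mul_self_sqrt (by norm_num)]; norm_num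

lemma hr2_ne : r2 ≠ 0 := by
  rw [r2]
  simp [Real.sqrt_ne_zero'.mpr (by norm_num : (0:ℝ) < 2)]

lemma ortho (x : Qubit) : ⟪tp x x, psiMinus⟫ = 0 := by
  simp only [PiLp.inner_apply, psiMinus]
  rw [Fintype.sum_prod_type]
  simp [Fin.sum_univ_two, tp_apply, mk2_apply_zero, mk2_apply_one]
  ring

lemma key : (-1 : ℂ) • tp (s 0) (s 0) + tp (s 1) (s 1) + tp (s 2) (s 2) + tp (s 3) (s 3) = 0 := by
  ext p
  obtain ⟨i, j⟩ := p
  fin_cases i <;> fin_cases j <;>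
    simp [tp_apply, s, mk2_apply_zero, mk2_apply_one, zeta_zero] <;>
    first
    | linear_combination 3 * hr3
    | linear_combination (r3 * r3 * r2) * zeta_sum
    | linear_combination (r3 * r3 * r2 * r2) * zeta_sum + (r3 * r3 * r2 * r2) * z11 +
        (r3 * r3 * r2 * r2) * z22

lemma e00 : tp (s 0) (s 0) = EuclideanSpace.single ((0 : Fin 2), (0 : Fin 2)) 1 := by
  ext p
  obtain ⟨i, j⟩ := p
  fin_cases i <;> fin_cases j <;>
    simp [tp_apply, s, mk2_apply_zero, mk2_apply_one, EuclideanSpace.single_apply]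

lemma z1c : ζ 1 ^ 3 = 1 := by
  rw [pow_succ, sq, z11, ← zeta_add, show (2+1:ℤ) = 3 by norm_num]; exact zeta_three
lemma z2c : ζ 2 ^ 3 = 1 := by
  rw [pow_succ, sq, z22, ← zeta_add, show (1+2:ℤ) = 3 by norm_num]; exact zeta_three

lemma combo1 : tp (s 1) (s 1) + ζ 2 • tp (s 2) (s 2) + ζ 1 • tp (s 3) (s 3) =
    r2 • (EuclideanSpace.single ((0 : Fin 2), (1 : Fin 2)) 1 +
          EuclideanSpace.single ((1 : Fin 2), (0 : Fin 2)) 1) := by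
  ext p
  obtain ⟨i, j⟩ := p
  fin_cases i <;> fin_cases j <;>
    simp [tp_apply, s, mk2_apply_zero, mk2_apply_one, EuclideanSpace.single_apply,
      zeta_zero, Prod.ext_iff] <;>
    first
    | linear_combination (r3 * r3) * zeta_sum
    | linear_combination 2 * r3 * r3 * r2 * z12 + 3 * r2 * hr3
    | linear_combination (r3 * r3 * r2 * r2) * zeta_sum +
        (r3 * r3 * r2 * r2 * (ζ 1 + ζ 2)) * z12

lemma combo2 : tp (s 1) (s 1) + ζ 1 • tp (s 2) (s 2) + ζ 2 • tp (s 3) (s 3) =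
    (2 : ℂ) • EuclideanSpace.single ((1 : Fin 2), (1 : Fin 2)) 1 := by
  ext p
  obtain ⟨i, j⟩ := p
  fin_cases i <;> fin_cases j <;>
    simp [tp_apply, s, mk2_apply_zero, mk2_apply_one, EuclideanSpace.single_apply,
      zeta_zero, Prod.ext_iff] <;>
    first
    | linear_combination (r3 * r3) * zeta_sum
    | linear_combination (r3 * r3 * r2) * zeta_sum + (r3 * r3 * r2) * z11 +
        (r3 * r3 * r2) * z22
    | linear_combination 3 * r2 * r2 * hr3 + hr2 + r3 * r3 * r2 * r2 * z1c + r3 * r3 * r2 * r2 * z2c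

/-- The parallel double-SIC vectors are all orthogonal to `Ψ⁻`, linearly dependent,
and span the 3-dimensional orthogonal complement of `ℂ·Ψ⁻`. -/
theorem parallel_double_SIC_linearly_dependent :
    (∀ i : Fin 4, ⟪tp (s i) (s i), psiMinus⟫ = 0) ∧
    ¬ LinearIndependent ℂ (fun i : Fin 4 => tp (s i) (s i)) ∧
    Module.finrank ℂ ↥((Submodule.span ℂ {psiMinus})ᗮ) = 3 ∧
    Submodule.span ℂ (Set.range fun i : Fin 4 => tp (s i) (s i)) =
      (Submodule.span ℂ {psiMinus})ᗮ := by
  have horth : ∀ i : Fin 4, ⟪tp (s i) (s i), psiMinus⟫ = 0 := fun i => ortho (s i)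
  -- psiMinus ≠ 0
  have hψ : psiMinus ≠ 0 := by
    intro h
    have h2 := congrArg (fun v => v ((0 : Fin 2), (1 : Fin 2))) h
    simp [psiMinus, tp_apply, mk2_apply_zero, mk2_apply_one] at h2
  -- finrank of the orthogonal complement
  have hfr : Module.finrank ℂ (EuclideanSpace ℂ (Fin 2 × Fin 2)) = 4 := by
    simp [finrank_euclideanSpace]
  have hspan1 : Module.finrank ℂ ↥(Submodule.span ℂ {psiMinus}) = 1 :=
    finrank_span_singleton hψ
  have hsum := Submodule.finrank_add_finrank_orthogonal
    (K := Submodule.span ℂ {psiMinus})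
  have h3 : Module.finrank ℂ ↥((Submodule.span ℂ {psiMinus})ᗮ) = 3 := by omega
  -- linear dependence
  have hdep : ¬ LinearIndependent ℂ (fun i : Fin 4 => tp (s i) (s i)) := by
    intro h
    have hsum0 : ∑ i : Fin 4, (![(-1 : ℂ), 1, 1, 1] i) • tp (s i) (s i) = 0 := by
      rw [Fin.sum_univ_four]
      simpa using key
    have := Fintype.linearIndependent_iff.mp h ![(-1 : ℂ), 1, 1, 1] hsum0 0
    simp at this
  refine ⟨horth, hdep, h3, ?_⟩
  -- span ≤ orthogonal complement
  have hle : Submodule.span ℂ (Set.range fun i : Fin 4 => tp (s i) (s i)) ≤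
      (Submodule.span ℂ {psiMinus})ᗮ := by
    rw [Submodule.span_le]
    rintro x ⟨i, rfl⟩
    rw [SetLike.mem_coe, Submodule.mem_orthogonal]
    intro u hu
    obtain ⟨a, rfl⟩ := Submodule.mem_span_singleton.mp hu
    rw [inner_smul_left, inner_eq_zero_symm.mp (horth i), mul_zero]
  -- membership of the three basis-like vectors in the span
  set V := Submodule.span ℂ (Set.range fun i : Fin 4 => tp (s i) (s i)) with hV
  have mem : ∀ i : Fin 4, tp (s i) (s i) ∈ V := fun i => Submodule.subset_span ⟨i, rfl⟩
  have m0 : EuclideanSpace.single ((0 : Fin 2), (0 : Fin 2)) 1 ∈ V := e00 ▸ mem 0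
  have m1 : EuclideanSpace.single ((0 : Fin 2), (1 : Fin 2)) 1 +
      EuclideanSpace.single ((1 : Fin 2), (0 : Fin 2)) 1 ∈ V := by
    have heq : EuclideanSpace.single ((0 : Fin 2), (1 : Fin 2)) 1 +
        EuclideanSpace.single ((1 : Fin 2), (0 : Fin 2)) 1 =
        r2⁻¹ • (tp (s 1) (s 1) + ζ 2 • tp (s 2) (s 2) + ζ 1 • tp (s 3) (s 3)) := by
      rw [combo1, smul_smul, inv_mul_cancel₀ hr2_ne, one_smul]
    rw [heq]
    exact Submodule.smul_mem _ _ (add_mem (add_mem (mem 1)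
      (Submodule.smul_mem _ _ (mem 2))) (Submodule.smul_mem _ _ (mem 3)))
  have m2 : EuclideanSpace.single ((1 : Fin 2), (1 : Fin 2)) 1 ∈ V := by
    have heq : EuclideanSpace.single ((1 : Fin 2), (1 : Fin 2)) 1 =
        (2 : ℂ)⁻¹ • (tp (s 1) (s 1) + ζ 1 • tp (s 2) (s 2) + ζ 2 • tp (s 3) (s 3)) := by
      rw [combo2, smul_smul, inv_mul_cancel₀ (by norm_num : (2:ℂ) ≠ 0), one_smul]
    rw [heq]
    exact Submodule.smul_mem _ _ (add_mem (add_mem (mem 1)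
      (Submodule.smul_mem _ _ (mem 2))) (Submodule.smul_mem _ _ (mem 3)))
  -- linearly independent triple
  set w : Fin 3 → EuclideanSpace ℂ (Fin 2 × Fin 2) :=
    ![EuclideanSpace.single ((0 : Fin 2), (0 : Fin 2)) 1,
      EuclideanSpace.single ((0 : Fin 2), (1 : Fin 2)) 1 +
        EuclideanSpace.single ((1 : Fin 2), (0 : Fin 2)) 1,
      EuclideanSpace.single ((1 : Fin 2), (1 : Fin 2)) 1] with hw
  have hwli : LinearIndependent ℂ w := by
    rw [Fintype.linearIndependent_iff]
    intro g hg
    rw [Fin.sum_univ_three] at hg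
    have h00 := congrArg (fun v => v ((0 : Fin 2), (0 : Fin 2))) hg
    have h01 := congrArg (fun v => v ((0 : Fin 2), (1 : Fin 2))) hg
    have h11 := congrArg (fun v => v ((1 : Fin 2), (1 : Fin 2))) hg
    simp [hw, EuclideanSpace.single_apply, Prod.ext_iff] at h00 h01 h11
    intro i
    fin_cases i <;> assumption
  have hwsub : Submodule.span ℂ (Set.range w) ≤ V := by
    rw [Submodule.span_le]
    rintro x ⟨k, rfl⟩
    fin_cases k
    · exact m0
    · exact m1
    · exact m2
  have hwfr : Module.finrank ℂ ↥(Submodule.span ℂ (Set.range w)) = 3 := by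
    rw [finrank_span_eq_card hwli]
    simp
  have hge : 3 ≤ Module.finrank ℂ ↥V := hwfr ▸ Submodule.finrank_mono hwsub
  exact Submodule.eq_of_le_of_finrank_le hle (h3 ▸ hge)
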